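/- Let N'' ≥ 1 and consider the state |φ⟩ = (1/N'') Σ_{i=0}^{N''-1} [ |i⟩ Σ_{j=0}^{min(2i, N''−1)} |j⟩ |0⟩ + |N''−1−i⟩ Σ_{j=min(N'', 2i+1)}^{N''-1} |j⟩ |1⟩ ]. For each n with 0 ≤ n ≤ N''−1, the squared norm of the projection of |φ⟩ onto |n⟩⟨n| ⊗ I ⊗ I equals (2n+1)/(N'')². -/

import Mathlib

theorem myLp_sum_apply {ι κ : Type*} (s : Finset κ) (f : κ → EuclideanSpace ℂ ι) (x : ι) :
    (∑ k ∈ s, f k) x = ∑ k ∈ s, f k x := by rw [WithLp.ofLp_sum, Finset.sum_apply]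

theorem phi_apply (N'' : ℕ) (hN'' : 1 ≤ N'')
    (φ : EuclideanSpace ℂ (Fin N'' × Fin N'' × Fin 2))
    (hφ : φ = (1 / (N'' : ℝ)) •
      ∑ i : Fin N'',
        ((∑ j ∈ (Finset.range (min (2 * (i : ℕ) + 1) N'')).attach,
            EuclideanSpace.single
              (i, (⟨(j : ℕ), lt_of_lt_of_le (Finset.mem_range.mp j.2) (min_le_right _ _)⟩ : Fin N''),
                (0 : Fin 2)) (1 : ℂ))
         + (∑ j ∈ (Finset.Ico (min N'' (2 * (i : ℕ) + 1)) N'').attach,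
            EuclideanSpace.single
              ((⟨N'' - 1 - (i : ℕ), lt_of_le_of_lt (Nat.sub_le _ _) (Nat.sub_lt hN'' Nat.one_pos)⟩ : Fin N''),
                (⟨(j : ℕ), (Finset.mem_Ico.mp j.2).2⟩ : Fin N''),
                (1 : Fin 2)) (1 : ℂ))))
    (a b : Fin N'') (c : Fin 2) :
    φ (a, b, c) = (1 / (N'' : ℝ)) * (if ((c:ℕ) = 0 ∧ (b:ℕ) ≤ 2*(a:ℕ)) ∨ ((c:ℕ) = 1 ∧ 2*N'' ≤ 2*(a:ℕ)+(b:ℕ)+1) then 1 else 0) := by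
  subst hφ
  rw [PiLp.smul_apply, myLp_sum_apply]
  simp only [PiLp.add_apply, myLp_sum_apply, EuclideanSpace.single_apply, Prod.mk.injEq,
    Fin.ext_iff, Fin.val_zero, Fin.val_one]
  have key1 : ∀ x : Fin N'',
      (∑ x_1 ∈ (Finset.range ((2*(x:ℕ)+1) ⊓ N'')).attach,
        if (a:ℕ) = ↑x ∧ (b:ℕ) = ↑x_1 ∧ (c:ℕ) = 0 then (1:ℂ) else 0)
      = if (a:ℕ) = ↑x ∧ (b:ℕ) < (2*(x:ℕ)+1) ⊓ N'' ∧ (c:ℕ) = 0 then 1 else 0 := by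
    intro x
    rw [Finset.sum_attach _ (fun m => if (a:ℕ) = ↑x ∧ (b:ℕ) = m ∧ (c:ℕ) = 0 then (1:ℂ) else 0)]
    by_cases h1 : (a:ℕ) = ↑x ∧ (c:ℕ) = 0
    · simp [h1.1, h1.2, Finset.sum_ite_eq]
    · rw [Finset.sum_eq_zero (fun m hm => if_neg (by tauto)), if_neg (by tauto)]
  have key2 : ∀ x : Fin N'',
      (∑ x_1 ∈ (Finset.Ico (N'' ⊓ (2*(x:ℕ)+1)) N'').attach,
        if (a:ℕ) = N'' - 1 - ↑x ∧ (b:ℕ) = ↑x_1 ∧ (c:ℕ) = 1 then (1:ℂ) else 0)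
      = if (a:ℕ) = N'' - 1 - ↑x ∧ (N'' ⊓ (2*(x:ℕ)+1) ≤ (b:ℕ) ∧ (b:ℕ) < N'') ∧ (c:ℕ) = 1 then 1 else 0 := by
    intro x
    rw [Finset.sum_attach _ (fun m => if (a:ℕ) = N'' - 1 - ↑x ∧ (b:ℕ) = m ∧ (c:ℕ) = 1 then (1:ℂ) else 0)]
    by_cases h1 : (a:ℕ) = N'' - 1 - ↑x ∧ (c:ℕ) = 1
    · simp [h1.1, h1.2, Finset.sum_ite_eq, Finset.mem_Ico]
    · rw [Finset.sum_eq_zero (fun m hm => if_neg (by tauto)), if_neg (by tauto)]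
  simp only [key1, key2]
  rw [Finset.sum_add_distrib]
  rw [Finset.sum_eq_single a (fun x _ hx => if_neg (by
        intro h; exact hx (Fin.ext h.1.symm))) (by simp)]
  rw [Finset.sum_eq_single (⟨N'' - 1 - (a:ℕ), by omega⟩ : Fin N'')
      (fun x _ hx => if_neg (by
        intro h
        exact hx (Fin.ext (by have := x.isLt; have := h.1; simp; omega))))
      (by simp)]
  have hb := b.isLt
  have ha := a.isLt
  have hc := c.isLt
  rw [Complex.real_smul]
  push_cast
  have hsimp : (N'' : ℕ) - 1 - (N'' - 1 - (a:ℕ)) = (a:ℕ) := by omega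
  simp only [hsimp]
  simp only [true_and, eq_self_iff_true]
  split_ifs <;> first | (exfalso; omega) | simp


/-- for the state φ = (1/N'') Σ_i [ |i⟩ Σ_{j=0}^{min(2i,N''−1)} |j⟩|0⟩
+ |N''−1−i⟩ Σ_{j=min(N'',2i+1)}^{N''−1} |j⟩|1⟩ ] in ℂ^{N''} ⊗ ℂ^{N''} ⊗ ℂ², the squared norm
of the projection onto |n⟩⟨n| ⊗ I ⊗ I equals (2n+1)/(N'')². -/
theorem stmt_7 (N'' : ℕ) (hN'' : 1 ≤ N'')
    (φ : EuclideanSpace ℂ (Fin N'' × Fin N'' × Fin 2))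
    (hφ : φ = (1 / (N'' : ℝ)) •
      ∑ i : Fin N'',
        ((∑ j ∈ (Finset.range (min (2 * (i : ℕ) + 1) N'')).attach,
            EuclideanSpace.single
              (i, (⟨(j : ℕ), by have := Finset.mem_range.mp j.2; omega⟩ : Fin N''),
                (0 : Fin 2)) (1 : ℂ))
         + (∑ j ∈ (Finset.Ico (min N'' (2 * (i : ℕ) + 1)) N'').attach,
            EuclideanSpace.single
              ((⟨N'' - 1 - (i : ℕ), by omega⟩ : Fin N''),
                (⟨(j : ℕ), by have := (Finset.mem_Ico.mp j.2).2; omega⟩ : Fin N''),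
                (1 : Fin 2)) (1 : ℂ)))) :
    ∀ n : Fin N'',
      ‖(show EuclideanSpace ℂ (Fin N'' × Fin N'' × Fin 2) from
          WithLp.toLp 2 (fun p => if p.1 = n then φ p else 0))‖ ^ 2
        = (2 * (n : ℝ) + 1) / (N'' : ℝ) ^ 2 := by
  intro n
  rw [EuclideanSpace.norm_eq, Real.sq_sqrt (by positivity)]
  rw [Fintype.sum_prod_type]
  have collapse : ∀ a : Fin N'',
      (∑ q : Fin N'' × Fin 2, ‖if (a, q.1, q.2).1 = n then φ (a, q.1, q.2) else 0‖ ^ 2)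
      = if a = n then (∑ q : Fin N'' × Fin 2, ‖φ (n, q.1, q.2)‖ ^ 2) else 0 := by
    intro a
    by_cases h : a = n
    · subst h; simp
    · simp [h]
  calc (∑ a : Fin N'', ∑ q : Fin N'' × Fin 2, ‖if (a, q).1 = n then φ (a, q) else 0‖ ^ 2)
      = ∑ a : Fin N'', if a = n then (∑ q : Fin N'' × Fin 2, ‖φ (n, q.1, q.2)‖ ^ 2) else 0 := by
        exact Finset.sum_congr rfl (fun a _ => collapse a)
    _ = ∑ q : Fin N'' × Fin 2, ‖φ (n, q.1, q.2)‖ ^ 2 := by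
        rw [Finset.sum_ite_eq' Finset.univ n]; simp
    _ = ∑ b : Fin N'', ∑ c : Fin 2, ‖φ (n, b, c)‖ ^ 2 := by rw [Fintype.sum_prod_type]
    _ = ∑ b : Fin N'', ((if (b:ℕ) ≤ 2*(n:ℕ) then (1/(N'':ℝ))^2 else 0)
          + (if 2*N'' ≤ 2*(n:ℕ)+(b:ℕ)+1 then (1/(N'':ℝ))^2 else 0)) := by
        refine Finset.sum_congr rfl (fun b _ => ?_)
        rw [Fin.sum_univ_two, phi_apply N'' hN'' φ hφ n b 0, phi_apply N'' hN'' φ hφ n b 1]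
        norm_num
        split_ifs <;> simp [Complex.norm_real] <;> ring
    _ = (2 * (n : ℝ) + 1) / (N'' : ℝ) ^ 2 := by
        rw [Finset.sum_add_distrib]
        rw [Fin.sum_univ_eq_sum_range (fun m => if m ≤ 2*(n:ℕ) then (1/(N'':ℝ))^2 else 0)]
        rw [Fin.sum_univ_eq_sum_range (fun m => if 2*N'' ≤ 2*(n:ℕ)+m+1 then (1/(N'':ℝ))^2 else 0)]
        rw [← Finset.sum_filter, ← Finset.sum_filter]
        have e1 : (Finset.range N'').filter (fun m => m ≤ 2*(n:ℕ)) = Finset.range (min (2*(n:ℕ)+1) N'') := by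
          ext m; simp [Finset.mem_filter, Finset.mem_range]; omega
        have e2 : (Finset.range N'').filter (fun m => 2*N'' ≤ 2*(n:ℕ)+m+1) = Finset.Ico (2*N''-2*(n:ℕ)-1) N'' := by
          ext m; simp [Finset.mem_filter, Finset.mem_range, Finset.mem_Ico]; omega
        rw [e1, e2, Finset.sum_const, Finset.sum_const, Finset.card_range, Nat.card_Ico,
          nsmul_eq_mul, nsmul_eq_mul, ← add_mul, ← Nat.cast_add]
        have hn := n.isLt
        have hnat : min (2*(n:ℕ)+1) N'' + (N'' - (2*N''-2*(n:ℕ)-1)) = 2*(n:ℕ)+1 := by omega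
        rw [hnat]
        have : (N'' : ℝ) ≠ 0 := by positivity
        push_cast
        field_simp
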